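/- The set D = { 2·log x / log φ : x is the unique positive real root of x^n − (F_n − b)x − (F_{n-1} − a) for some n ≥ 2, natural numbers a ≤ F_{n-1}, b ≤ F_n not both maximal } is dense in the interval [0, 2]. -/

import Mathlib

open Real

lemma gold_pow_le_fib : ∀ n : ℕ, goldenRatio ^ n ≤ (Nat.fib (n + 2) : ℝ) := by
  intro n
  induction n using Nat.twoStepInduction with
  | zero => simp
  | one => simpa [show Nat.fib 3 = 2 from rfl] using goldenRatio_lt_two.le
  | more n ih1 ih2 =>
    have h : goldenRatio ^ (n + 2) = goldenRatio ^ (n + 1) + goldenRatio ^ n := by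
      calc goldenRatio ^ (n + 2) = goldenRatio ^ n * goldenRatio ^ 2 := by ring
      _ = goldenRatio ^ n * (goldenRatio + 1) := by rw [goldenRatio_sq]
      _ = goldenRatio ^ (n + 1) + goldenRatio ^ n := by ring
    have hfib : (Nat.fib (n + 2 + 2) : ℝ) = Nat.fib (n + 1 + 2) + Nat.fib (n + 2) := by
      rw [Nat.fib_add_two]; push_cast; ring
    rw [h, hfib]
    linarith

set_option maxHeartbeats 1600000 in
theorem dimensions_dense :
    Set.Icc (0 : ℝ) 2 ⊆
      closure {d : ℝ | ∃ n : ℕ, 2 ≤ n ∧ ∃ a b : ℕ,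
        a ≤ Nat.fib (n - 1) ∧ b ≤ Nat.fib n ∧
        ¬(a = Nat.fib (n - 1) ∧ b = Nat.fib n) ∧
        ∃ x : ℝ, 0 < x ∧
          x ^ n - ((Nat.fib n : ℝ) - b) * x - ((Nat.fib (n - 1) : ℝ) - a) = 0 ∧
          d = 2 * Real.log x / Real.log ((1 + Real.sqrt 5) / 2)} := by
  intro t ht
  obtain ⟨ht0, ht2⟩ := ht
  rw [Metric.mem_closure_iff]
  intro ε hε
  have hc0 : 0 < Real.log goldenRatio := Real.log_pos one_lt_goldenRatio
  set c := Real.log goldenRatio with hc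
  obtain ⟨N, hN⟩ := exists_nat_gt (max (2 * Real.log 2 / (ε * c)) (2 / ε))
  have hN1 : (2 * Real.log 2 / (ε * c)) < N := lt_of_le_of_lt (le_max_left _ _) hN
  have hN2 : (2 / ε) < N := lt_of_le_of_lt (le_max_right _ _) hN
  set m : ℝ := (N : ℝ) + 1 with hm
  have hm0 : 0 < m := by positivity
  set r : ℝ := t * m * c / 2 with hr
  have hr0 : 0 ≤ r := by positivity
  set K : ℕ := ⌊Real.exp r⌋₊ with hK
  set M : ℕ := Nat.fib (N + 2) with hM
  have hM1 : 1 ≤ M := Nat.fib_pos.mpr (by omega)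
  have hK1 : 1 ≤ K := Nat.le_floor (by simpa using Real.one_le_exp hr0)
  set k : ℕ := min K M with hk
  have hk1 : 1 ≤ k := le_min hK1 hM1
  have hkM : k ≤ M := min_le_right _ _
  have hk0 : (0:ℝ) < (k:ℝ) := by exact_mod_cast hk1
  -- the root x
  set x : ℝ := (k : ℝ) ^ (m⁻¹) with hx
  have hx0 : 0 < x := Real.rpow_pos_of_pos hk0 _
  have hxpow : x ^ (N + 1) = (k : ℝ) := by
    rw [hx, ← Real.rpow_natCast ((k:ℝ) ^ m⁻¹) (N+1), ← Real.rpow_mul hk0.le]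
    have : m⁻¹ * ((N+1 : ℕ):ℝ) = 1 := by
      push_cast; rw [hm]; field_simp
    rw [this, Real.rpow_one]
  have hlogx : Real.log x = m⁻¹ * Real.log k := Real.log_rpow hk0 _
  have hgold : Real.log ((1 + Real.sqrt 5) / 2) = c := rfl
  have hKle : (K:ℝ) ≤ Real.exp r := Nat.floor_le (Real.exp_pos _).le
  have hfloor : Real.exp r < (K:ℝ) + 1 := Nat.lt_floor_add_one _
  have hkfib : k ≤ Nat.fib (N + 2) := hM ▸ hkM
  clear_value c m r K M k x
  -- bounds on log k
  have hlogk_le : Real.log k ≤ r := by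
    have h1 : (k:ℝ) ≤ Real.exp r := by
      calc (k:ℝ) ≤ (K:ℝ) := by exact_mod_cast (hk ▸ min_le_left K M)
      _ ≤ Real.exp r := hKle
    calc Real.log k ≤ Real.log (Real.exp r) := Real.log_le_log hk0 h1
    _ = r := Real.log_exp r
  have hkey : r - Real.log k < ε * m * c / 2 := by
    rcases le_or_gt K M with hKM | hKM
    · -- k = K = floor (exp r)
      have hkK : k = K := by rw [hk]; exact min_eq_left hKM
      have h2 : Real.exp r < 2 * k := by
        calc Real.exp r < (K:ℝ) + 1 := hfloor
        _ ≤ 2 * k := by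
              have h : (1:ℝ) ≤ (K:ℝ) := by exact_mod_cast hK1
              rw [hkK]; linarith
      have h3 : r < Real.log 2 + Real.log k := by
        have := Real.log_lt_log (Real.exp_pos r) h2
        rwa [Real.log_exp, Real.log_mul (by norm_num) (ne_of_gt hk0)] at this
      have h4 : 2 * Real.log 2 < ε * c * m := by
        rw [div_lt_iff₀ (by positivity)] at hN1
        nlinarith
      nlinarith
    · -- k = M = fib (N+2), and log k ≥ N * c
      have hkM' : k = M := by rw [hk]; exact min_eq_right hKM.le
      have h5 : (N:ℝ) * c ≤ Real.log k := by
        rw [hkM', hM]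
        calc (N:ℝ) * c = Real.log (goldenRatio ^ N) := by rw [Real.log_pow, ← hc]
        _ ≤ Real.log (Nat.fib (N + 2)) :=
            Real.log_le_log (pow_pos goldenRatio_pos N) (gold_pow_le_fib N)
      have h6 : r ≤ m * c := by
        rw [hr]
        nlinarith [mul_nonneg (mul_nonneg (show (0:ℝ) ≤ 2 - t by linarith) hm0.le) hc0.le]
      have h7 : 2 < ε * m := by
        rw [div_lt_iff₀ hε] at hN2
        nlinarith
      have h9 : r - Real.log k ≤ c := by
        have : m * c - (N:ℝ) * c = c := by rw [hm]; ring
        linarith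
      have h8 : 0 < (ε * m - 2) * c := mul_pos (by linarith) hc0
      have h8' : (ε * m - 2) * c = ε * m * c - 2 * c := by ring
      linarith
  -- the candidate element
  refine ⟨2 * Real.log x / c,
    ⟨N + 2, by omega, Nat.fib (N + 1), Nat.fib (N + 2) - k, ?_, Nat.sub_le _ _, ?_, x, hx0, ?_, rfl⟩, ?_⟩
  · simp
  · rintro ⟨-, hb⟩
    omega
  · have hcast : ((Nat.fib (N + 2) - k : ℕ) : ℝ) = (Nat.fib (N+2) : ℝ) - (k:ℝ) :=
      Nat.cast_sub hkfib
    have hn1 : (N + 2) - 1 = N + 1 := rfl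
    rw [hn1, hcast]
    have hxn : x ^ (N + 2) = (k:ℝ) * x := by
      rw [pow_succ, hxpow]
    rw [hxn]
    ring
  · rw [Real.dist_eq, hlogx]
    have hd : 2 * (m⁻¹ * Real.log k) / c = 2 * Real.log k / (m * c) := by
      rw [div_mul_eq_div_div]
      field_simp
    rw [hd]
    have ht' : t = 2 * r / (m * c) := by
      rw [hr]; field_simp
    have hdiff : t - 2 * Real.log k / (m * c) = 2 * (r - Real.log k) / (m * c) := by
      rw [ht']; field_simp
    have h0 : 0 ≤ t - 2 * Real.log k / (m * c) := by
      rw [hdiff]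
      apply div_nonneg (by linarith) (by positivity)
    have h1 : t - 2 * Real.log k / (m * c) < ε := by
      rw [hdiff, div_lt_iff₀ (by positivity)]
      nlinarith
    rw [abs_of_nonneg h0]
    exact h1
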